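/- Let T be a stress-energy tensor on (N+1)-dimensional Minkowski space satisfying the dominant energy condition. Let V be a future-directed timelike vector normalized so that η(V,V) = -1, and let A be a vector with η(V,A) = 0. Then |T(A,A)| ≤ T(V,V) · η(A,A). -/
import Mathlib


open Matrix

/-- The Minkowski metric `diag(-1,1,…,1)` on `ℝ^{N+1}`. -/
noncomputable def eta (N : ℕ) : Matrix (Fin (N+1)) (Fin (N+1)) ℝ :=
  Matrix.diagonal (fun i => if i = 0 then (-1 : ℝ) else 1)

/-- The Minkowski bilinear form `η(x,y) = -x₀y₀ + ∑ᵢ xᵢyᵢ`. -/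
noncomputable def mdot {N : ℕ} (x y : Fin (N+1) → ℝ) : ℝ :=
  x ⬝ᵥ (eta N).mulVec y

/-- Future-directed timelike: `η(v,v) < 0` and `v₀ > 0`. -/
def FDTimelike {N : ℕ} (v : Fin (N+1) → ℝ) : Prop :=
  mdot v v < 0 ∧ 0 < v 0

/-- Future-directed lightlike: `v ≠ 0`, `η(v,v) = 0` and `v₀ > 0`. -/
def FDLightlike {N : ℕ} (v : Fin (N+1) → ℝ) : Prop :=
  v ≠ 0 ∧ mdot v v = 0 ∧ 0 < v 0

/-- Future-directed causal: future-directed timelike or lightlike. -/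
def FDCausal {N : ℕ} (v : Fin (N+1) → ℝ) : Prop :=
  FDTimelike v ∨ FDLightlike v

/-- The bilinear form associated to a matrix: `T(v,w) = vᵀ T w`. -/
noncomputable def Tbil {N : ℕ} (T : Matrix (Fin (N+1)) (Fin (N+1)) ℝ)
    (v w : Fin (N+1) → ℝ) : ℝ :=
  v ⬝ᵥ T.mulVec w

/-- The endomorphism associated to a stress-energy tensor: `u(v) = -ηTv`. -/
noncomputable def endo {N : ℕ} (T : Matrix (Fin (N+1)) (Fin (N+1)) ℝ)
    (v : Fin (N+1) → ℝ) : Fin (N+1) → ℝ :=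
  -((eta N).mulVec (T.mulVec v))

/-- The dominant energy condition: every future-directed causal vector is
sent by the associated endomorphism to a future-directed causal vector or zero. -/
def DEC {N : ℕ} (T : Matrix (Fin (N+1)) (Fin (N+1)) ℝ) : Prop :=
  ∀ v : Fin (N+1) → ℝ, FDCausal v → FDCausal (endo T v) ∨ endo T v = 0

/-- The spatial part of the Minkowski product. -/
noncomputable def Spart {N : ℕ} (x y : Fin (N+1) → ℝ) : ℝ :=
  ∑ i ∈ Finset.univ.erase 0, x i * y i

lemma mdot_eq {N : ℕ} (x y : Fin (N+1) → ℝ) :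
    mdot x y = -(x 0 * y 0) + Spart x y := by
  unfold mdot eta Spart
  simp only [dotProduct, Matrix.mulVec_diagonal]
  rw [← Finset.add_sum_erase Finset.univ _ (Finset.mem_univ 0)]
  congr 1
  · simp
  · exact Finset.sum_congr rfl fun i hi => by
      rw [if_neg (Finset.ne_of_mem_erase hi)]; ring

lemma Spart_nonneg {N : ℕ} (x : Fin (N+1) → ℝ) : 0 ≤ Spart x x :=
  Finset.sum_nonneg fun i _ => mul_self_nonneg _

lemma Spart_cauchy {N : ℕ} (x y : Fin (N+1) → ℝ) :
    (Spart x y)^2 ≤ Spart x x * Spart y y := by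
  have h := Finset.sum_mul_sq_le_sq_mul_sq (Finset.univ.erase (0 : Fin (N+1))) x y
  simpa [Spart, sq, Finset.mul_sum] using h

/-- Bilinear expansion. -/
lemma Tbil_exp {N : ℕ} (M : Matrix (Fin (N+1)) (Fin (N+1)) ℝ)
    (a c d : ℝ) (x y : Fin (N+1) → ℝ) :
    Tbil M (a • x + c • y) (a • x + d • y)
      = a*a*Tbil M x x + a*d*Tbil M x y + c*a*Tbil M y x + c*d*Tbil M y y := by
  simp [Tbil, Matrix.mulVec_add, Matrix.mulVec_smul, dotProduct_add, add_dotProduct,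
    dotProduct_smul, smul_dotProduct, smul_eq_mul]
  ring

lemma mdot_eq_Tbil {N : ℕ} (x y : Fin (N+1) → ℝ) : mdot x y = Tbil (eta N) x y := rfl

lemma Tbil_symm {N : ℕ} {M : Matrix (Fin (N+1)) (Fin (N+1)) ℝ} (h : M.IsSymm)
    (x y : Fin (N+1) → ℝ) : Tbil M x y = Tbil M y x := by
  unfold Tbil
  rw [Matrix.dotProduct_mulVec, ← Matrix.mulVec_transpose, h.eq, dotProduct_comm]

lemma eta_isSymm {N : ℕ} : (eta N).IsSymm := Matrix.isSymm_diagonal _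

lemma mdot_symm {N : ℕ} (x y : Fin (N+1) → ℝ) : mdot x y = mdot y x :=
  Tbil_symm eta_isSymm x y

/-- Causal vectors have nonpositive Minkowski product. -/
lemma causal_mdot_nonpos {N : ℕ} {u w : Fin (N+1) → ℝ}
    (hu : FDCausal u) (hw : FDCausal w) : mdot u w ≤ 0 := by
  have huu : mdot u u ≤ 0 := by rcases hu with ⟨h, _⟩ | ⟨_, h, _⟩ <;> linarith
  have hu0 : 0 < u 0 := by rcases hu with ⟨_, h⟩ | ⟨_, _, h⟩ <;> exact h
  have hww : mdot w w ≤ 0 := by rcases hw with ⟨h, _⟩ | ⟨_, h, _⟩ <;> linarith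
  have hw0 : 0 < w 0 := by rcases hw with ⟨_, h⟩ | ⟨_, _, h⟩ <;> exact h
  rw [mdot_eq] at huu hww ⊢
  have hcs := Spart_cauchy u w
  have h1 := Spart_nonneg u
  have h2 := Spart_nonneg w
  nlinarith [sq_nonneg (Spart u w + u 0 * w 0), sq_nonneg (Spart u w - u 0 * w 0),
    mul_pos hu0 hw0]

/-- A null vector with negative product against a future timelike vector
is future directed. -/
lemma null_future {N : ℕ} {V w : Fin (N+1) → ℝ} (hV : FDTimelike V)
    (hw : mdot w w = 0) (hneg : mdot w V < 0) : 0 < w 0 := by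
  obtain ⟨hVt, hV0⟩ := hV
  rw [mdot_eq] at hVt hw hneg
  have hcs := Spart_cauchy w V
  have h1 := Spart_nonneg w
  have h2 := Spart_nonneg V
  by_contra h
  push_neg at h
  rcases eq_or_lt_of_le h with h0 | h0
  · -- w 0 = 0: Spart w w = 0 so Spart w V = 0, so mdot w V = 0
    have hSw : Spart w w = 0 := by nlinarith
    have hle : (Spart w V)^2 ≤ 0 := by nlinarith
    have hz : Spart w V = 0 :=
      pow_eq_zero_iff two_ne_zero |>.mp (le_antisymm hle (sq_nonneg _))
    rw [h0, hz] at hneg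
    nlinarith
  · nlinarith [sq_nonneg (Spart w V - w 0 * V 0), mul_pos (neg_pos.2 h0) hV0]

/-- A nonzero vector orthogonal to a timelike vector is spacelike. -/
lemma orth_spacelike {N : ℕ} {V A : Fin (N+1) → ℝ} (hV : FDTimelike V)
    (horth : mdot V A = 0) (hA : A ≠ 0) : 0 < mdot A A := by
  obtain ⟨hVt, hV0⟩ := hV
  rw [mdot_eq] at hVt horth ⊢
  have hcs := Spart_cauchy V A
  have h1 := Spart_nonneg V
  have h2 := Spart_nonneg A
  rcases eq_or_lt_of_le h2 with hSA | hSA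
  · exfalso
    apply hA
    have hSA' : ∑ i ∈ Finset.univ.erase (0 : Fin (N+1)), A i * A i = 0 := hSA.symm
    have hall : ∀ i ∈ Finset.univ.erase (0 : Fin (N+1)), A i * A i = 0 := by
      intro i hi
      exact (Finset.sum_eq_zero_iff_of_nonneg
        (fun i _ => mul_self_nonneg (A i))).1 hSA' i hi
    have hA0 : A 0 = 0 := by
      have hSVA : (Spart V A)^2 ≤ 0 := by nlinarith
      have : Spart V A = 0 := by nlinarith
      have : V 0 * A 0 = 0 := by linarith
      rcases mul_eq_zero.1 this with h | h
      · linarith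
      · exact h
    funext i
    rcases eq_or_ne i 0 with rfl | hi
    · exact hA0
    · have := hall i (Finset.mem_erase.2 ⟨hi, Finset.mem_univ i⟩)
      exact mul_self_eq_zero.1 this
  · have hsva : Spart V A = V 0 * A 0 := by linarith
    rw [hsva] at hcs
    have h4 : Spart V V * Spart A A < (V 0 * V 0) * Spart A A :=
      mul_lt_mul_of_pos_right (by linarith) hSA
    have key : V 0 * V 0 * (A 0 * A 0) < V 0 * V 0 * Spart A A := by nlinarith [hcs, h4]
    have := (mul_lt_mul_iff_right₀ (mul_pos hV0 hV0)).1 key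
    linarith

lemma mdot_endo {N : ℕ} (T : Matrix (Fin (N+1)) (Fin (N+1)) ℝ)
    (v w : Fin (N+1) → ℝ) : mdot (endo T v) w = -(Tbil T w v) := by
  unfold mdot endo Tbil
  simp only [dotProduct, eta, Matrix.mulVec_diagonal, Pi.neg_apply]
  rw [← Finset.sum_neg_distrib]
  refine Finset.sum_congr rfl fun i _ => ?_
  split_ifs <;> ring

lemma mdot_zero_left {N : ℕ} (w : Fin (N+1) → ℝ) : mdot 0 w = 0 := by
  simp [mdot]

/-- DEC implies the bilinear form is nonnegative on pairs of causal vectors. -/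
lemma dec_bil_nonneg {N : ℕ} {T : Matrix (Fin (N+1)) (Fin (N+1)) ℝ}
    (hsymm : T.IsSymm) (hdec : DEC T) {v w : Fin (N+1) → ℝ}
    (hv : FDCausal v) (hw : FDCausal w) : 0 ≤ Tbil T v w := by
  rw [Tbil_symm hsymm]
  rcases hdec v hv with hc | h0
  · have := causal_mdot_nonpos hc hw
    rw [mdot_endo] at this
    linarith
  · have := mdot_endo T v w
    rw [h0, mdot_zero_left] at this
    linarith

/-- `|T(A,A)| ≤ T(V,V) ⬝ |A|²` for `V` unit timelike and `A` orthogonal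
to `V`. -/
theorem dec_ineq_AA {N : ℕ} (hN : 1 ≤ N)
    (T : Matrix (Fin (N+1)) (Fin (N+1)) ℝ) (hsymm : T.IsSymm)
    (hdec : DEC T)
    (V : Fin (N+1) → ℝ) (hV : FDTimelike V) (hVnorm : mdot V V = -1)
    (A : Fin (N+1) → ℝ) (horth : mdot V A = 0) :
    |Tbil T A A| ≤ Tbil T V V * mdot A A := by
  by_cases hA : A = 0
  · subst hA
    simp [Tbil, mdot, Matrix.mulVec_zero]
  · have hAA : 0 < mdot A A := orth_spacelike hV horth hA
    set a := Real.sqrt (mdot A A) with ha_def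
    have ha0 : 0 < a := Real.sqrt_pos.2 hAA
    have ha2 : a * a = mdot A A := Real.mul_self_sqrt hAA.le
    have hAV : mdot A V = 0 := by rw [mdot_symm]; exact horth
    -- the two null vectors
    set wp := a • V + (1:ℝ) • A with hwp_def
    set wm := a • V + (-1:ℝ) • A with hwm_def
    have hnullp : mdot wp wp = 0 := by
      rw [hwp_def, mdot_eq_Tbil, Tbil_exp, ← mdot_eq_Tbil, ← mdot_eq_Tbil,
        ← mdot_eq_Tbil, ← mdot_eq_Tbil, hVnorm, horth, hAV]
      ring_nf
      nlinarith [ha2]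
    have hnullm : mdot wm wm = 0 := by
      rw [hwm_def, mdot_eq_Tbil, Tbil_exp, ← mdot_eq_Tbil, ← mdot_eq_Tbil,
        ← mdot_eq_Tbil, ← mdot_eq_Tbil, hVnorm, horth, hAV]
      ring_nf
      nlinarith [ha2]
    have hlin : ∀ z : Fin (N+1) → ℝ, ∀ c : ℝ,
        mdot (a • V + c • A) z = a * mdot V z + c * mdot A z := by
      intro z c
      simp [mdot, add_dotProduct, smul_dotProduct, smul_eq_mul]
    have hmwpV : mdot wp V = -a := by
      rw [hwp_def, hlin, hVnorm, hAV]; ring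
    have hmwmV : mdot wm V = -a := by
      rw [hwm_def, hlin, hVnorm, hAV]; ring
    have hwpne : wp ≠ 0 := by
      intro h
      rw [h, mdot_zero_left] at hmwpV
      linarith
    have hwmne : wm ≠ 0 := by
      intro h
      rw [h, mdot_zero_left] at hmwmV
      linarith
    have hcp : FDCausal wp :=
      Or.inr ⟨hwpne, hnullp, null_future hV hnullp (by rw [hmwpV]; linarith)⟩
    have hcm : FDCausal wm :=
      Or.inr ⟨hwmne, hnullm, null_future hV hnullm (by rw [hmwmV]; linarith)⟩
    have hP := dec_bil_nonneg hsymm hdec hcp hcp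
    have hQ := dec_bil_nonneg hsymm hdec hcm hcm
    have hR := dec_bil_nonneg hsymm hdec hcp hcm
    have hTs : Tbil T V A = Tbil T A V := Tbil_symm hsymm V A
    rw [hwp_def] at hP hR
    rw [hwm_def] at hQ hR
    rw [Tbil_exp] at hP hQ hR
    rw [ha2] at hP hQ hR
    rw [abs_le]
    constructor
    · nlinarith [hP, hQ, ha2]
    · nlinarith [hR, ha2]
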